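/- In a comical set X, the homotopy relation on 1-cubes with fixed endpoints x, y (defined by existence of a marked 2-cube with boundary f on one face, g on the parallel face, and degenerate 1-cubes on the remaining two faces) is an equivalence relation. -/

import Mathlib

/-- The poset `[1]^n = {0 ≤ 1}^n`, modeled as functions `Fin n → Bool`. -/
def Cube (n : ℕ) : Type := Fin n → Bool

/-- The face map `∂_{i,ε} : [1]^n → [1]^(n+1)` inserting `ε` at position `i` (0-based). -/
def face {n : ℕ} (i : Fin (n + 1)) (ε : Bool) (x : Cube n) : Cube (n + 1) :=
  Fin.insertNth i ε x

/-- The degeneracy `σ_i : [1]^(n+1) → [1]^n` deleting coordinate `i` (0-based). -/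
def degen {n : ℕ} (i : Fin (n + 1)) (x : Cube (n + 1)) : Cube n :=
  fun j => x (i.succAbove j)

/-- The connection `γ_{i,ε} : [1]^(n+2) → [1]^(n+1)` merging coordinates `i` and `i+1`
(0-based), using `max` when `ε = true` and `min` when `ε = false`. -/
def conn {n : ℕ} (i : Fin (n + 1)) (ε : Bool) (x : Cube (n + 2)) : Cube (n + 1) :=
  fun j =>
    if j.val < i.val then x j.castSucc
    else if j.val = i.val then
      (if ε then x i.castSucc || x i.succ else x i.castSucc && x i.succ)
    else x j.succ

/-- The predicate on functions `[1]^m → [1]^n` of being a morphism of the box category `□`,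
i.e. a composite of faces, degeneracies and connections. -/
inductive IsBoxMap : {m n : ℕ} → (Cube m → Cube n) → Prop
  | id {n : ℕ} : IsBoxMap (fun x : Cube n => x)
  | face {n : ℕ} (i : Fin (n + 1)) (ε : Bool) : IsBoxMap (face i ε)
  | degen {n : ℕ} (i : Fin (n + 1)) : IsBoxMap (degen i)
  | conn {n : ℕ} (i : Fin (n + 1)) (ε : Bool) : IsBoxMap (conn i ε)
  | comp {m n k : ℕ} {f : Cube m → Cube n} {g : Cube n → Cube k} :
      IsBoxMap f → IsBoxMap g → IsBoxMap (g ∘ f)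

/-- The face map with 1-based index `p` (as in the paper); out-of-range indices are clamped. -/
def face1 {n : ℕ} (p : ℕ) (ε : Bool) : Cube n → Cube (n + 1) :=
  face ⟨min (p - 1) n, by omega⟩ ε

/-- The degeneracy with 1-based index `p`; out-of-range indices are clamped. -/
def degen1 {n : ℕ} (p : ℕ) : Cube (n + 1) → Cube n :=
  degen ⟨min (p - 1) n, by omega⟩

/-- The connection with 1-based index `p`; out-of-range indices are clamped. -/
def conn1 {n : ℕ} (p : ℕ) (ε : Bool) : Cube (n + 2) → Cube (n + 1) :=
  conn ⟨min (p - 1) n, by omega⟩ ε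

theorem face1_isBoxMap {n : ℕ} (p : ℕ) (ε : Bool) : IsBoxMap (face1 (n := n) p ε) :=
  IsBoxMap.face _ _

theorem degen1_isBoxMap {n : ℕ} (p : ℕ) : IsBoxMap (degen1 (n := n) p) :=
  IsBoxMap.degen _

/-- Transport a cube along an equality of dimensions. -/
def cubeCast {m n : ℕ} (h : m = n) (x : Cube m) : Cube n := fun j => x (Fin.cast h.symm j)

/-- The composite `σ_{i_1} ⋯ σ_{i_r}` of degeneracies (1-based indices, the head of the
list being the outermost, i.e. last applied, degeneracy), as a map `[1]^{n+r} → [1]^n`. -/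
def sigmaWord : (l : List ℕ) → {n : ℕ} → Cube (n + l.length) → Cube n
  | [], _, x => x
  | p :: l, n, x => degen1 p (sigmaWord l (n := n + 1) (cubeCast (by simp only [List.length_cons]; omega) x))

/-- Validity of the 1-based indices in a word of degeneracies with codomain `[1]^n`. -/
def sigmaValid : List ℕ → ℕ → Prop
  | [], _ => True
  | p :: l, n => 1 ≤ p ∧ p ≤ n + 1 ∧ sigmaValid l (n + 1)

/-- The composite `γ_{j_1,δ_1} ⋯ γ_{j_s,δ_s}` of connections (1-based indices, head of the
list outermost), as a map `[1]^{n+s} → [1]^n`. -/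
def gammaWord : (l : List (ℕ × Bool)) → {n : ℕ} → Cube (n + l.length) → Cube n
  | [], _, x => x
  | (p, ε) :: l, n + 1, x => conn1 p ε (gammaWord l (n := n + 2) (cubeCast (by simp only [List.length_cons]; omega) x))
  | _ :: _, 0, _ => fun _ => false

/-- Validity of the 1-based indices in a word of connections with codomain `[1]^n`. -/
def gammaValid : List (ℕ × Bool) → ℕ → Prop
  | [], _ => True
  | (p, _) :: l, n => 1 ≤ p ∧ p ≤ n ∧ gammaValid l (n + 1)

/-- The composite `∂_{k_1,ε_1} ⋯ ∂_{k_t,ε_t}` of faces (1-based indices, head of the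
list outermost), as a map `[1]^n → [1]^{n+t}`. -/
def deltaWord : (l : List (ℕ × Bool)) → {n : ℕ} → Cube n → Cube (n + l.length)
  | [], _, x => x
  | (p, ε) :: l, n, x => cubeCast (by simp only [List.length_cons]; omega) (face1 p ε (deltaWord l x))

/-- Validity of the 1-based indices in a word of faces with domain `[1]^n`. -/
def deltaValid : List (ℕ × Bool) → ℕ → Prop
  | [], _ => True
  | (p, _) :: l, n => 1 ≤ p ∧ p ≤ n + l.length + 1 ∧ deltaValid l n

/-- A marked cubical set: a presheaf on the box category `□` (presented by functions between
cubes that are composites of the generating operators) together with, for each `n`, a set of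
marked `n`-cubes containing all degenerate cubes (images of degeneracies and connections),
with no marked `0`-cubes. -/
structure MCSet where
  obj : ℕ → Type
  map : ∀ {m n : ℕ} (f : Cube m → Cube n), IsBoxMap f → obj n → obj m
  map_id : ∀ (n : ℕ) (x : obj n), map (fun y => y) IsBoxMap.id x = x
  map_comp : ∀ {m n k : ℕ} (f : Cube m → Cube n) (hf : IsBoxMap f)
      (g : Cube n → Cube k) (hg : IsBoxMap g) (x : obj k),
      map (g ∘ f) (IsBoxMap.comp hf hg) x = map f hf (map g hg x)
  marked : ∀ {n : ℕ}, obj n → Prop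
  marked_degen : ∀ {n : ℕ} (i : Fin (n + 1)) (x : obj n),
      marked (map (degen i) (IsBoxMap.degen i) x)
  marked_conn : ∀ {n : ℕ} (i : Fin (n + 1)) (ε : Bool) (x : obj (n + 1)),
      marked (map (conn i ε) (IsBoxMap.conn i ε) x)
  not_marked_zero : ∀ x : obj 0, ¬ marked x

/-- The four faces `∂_{k-1,ε}`, `∂_{k,ε}`, `∂_{k,1-ε}`, `∂_{k+1,ε}` (1-based indices)
which must not occur in the normal form of a marked face of the comical cube `□ⁿ_{k,ε}`. -/
def avoidSet (k : ℕ) (ε : Bool) : Set (ℕ × Bool) :=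
  {(k - 1, ε), (k, ε), (k, !ε), (k + 1, ε)}

/-- The marking of the comical cube `□ⁿ_{k,ε}` (1-based `k`): an `m`-cube `f : [1]^m → [1]^n`
of the representable cubical set `□ⁿ` is marked iff it is degenerate (non-injective), or its
normal form `∂_{k_1,ε_1} ⋯ ∂_{k_t,ε_t}` (with `k_1 > ⋯ > k_t ≥ 1`) contains none of
`∂_{k-1,ε}`, `∂_{k,ε}`, `∂_{k,1-ε}`, `∂_{k+1,ε}`. -/
def ComicallyMarked (n k : ℕ) (ε : Bool) {m : ℕ} (f : Cube m → Cube n) : Prop :=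
  (¬ Function.Injective f) ∨
  ∃ (ld : List (ℕ × Bool)) (h : n = m + ld.length),
    deltaValid ld m ∧ (ld.map Prod.fst).Chain' (· > ·) ∧
    (∀ pr ∈ ld, pr ∉ avoidSet k ε) ∧
    (∀ x : Cube m, f x = cubeCast h.symm (deltaWord ld x))

/-- Membership in the `(k,ε)`-open box `⊓ⁿ⁺¹_{k,ε} ⊆ □ⁿ⁺¹` (1-based `k`):
an `m`-cube `f` of the representable `□ⁿ⁺¹` lies in the open box iff it factors through
some face `∂_{j,δ}` with `(j,δ) ≠ (k,ε)`. -/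
def InBox (n k : ℕ) (ε : Bool) {m : ℕ} (f : Cube m → Cube (n + 1)) : Prop :=
  ∃ (j : ℕ) (δ : Bool) (g : Cube m → Cube n), IsBoxMap g ∧
    1 ≤ j ∧ j ≤ n + 1 ∧ (j, δ) ≠ (k, ε) ∧ f = (face1 j δ) ∘ g

/-- A comical set: a marked cubical set with the right lifting property with respect to all
comical open box inclusions and all elementary comical marking extensions.

The lifting property against the open box inclusion `⊓ⁿ⁺¹_{k,ε} ↪ □ⁿ⁺¹_{k,ε}` is expressed
via the Yoneda lemma: every marking-respecting compatible family indexed by the cubes of the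
open box extends to a marked `(n+1)`-cube inducing it.

The lifting property against the elementary comical marking extension is likewise expressed
via Yoneda: any `(n+1)`-cube `x` all of whose structure cubes which are marked in
`□ⁿ⁺¹_{k,ε} ∪_{⊓} τ_{n-1}⊓ⁿ⁺¹_{k,ε}` (i.e. comically marked cubes, together with the cubes
of the open box of dimension ≥ n) are marked in `X`, also has marked `(k,ε)`-face. -/
structure IsComical (X : MCSet) : Prop where
  fill : ∀ (n k : ℕ) (ε : Bool), 1 ≤ k → k ≤ n + 1 →
    ∀ (b : ∀ {m : ℕ} (f : Cube m → Cube (n + 1)),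
        IsBoxMap f → InBox n k ε f → X.obj m),
      (∀ {m m' : ℕ} (g : Cube m → Cube m') (hg : IsBoxMap g)
          (f : Cube m' → Cube (n + 1)) (hf : IsBoxMap f)
          (hbox : InBox n k ε f) (hbox' : InBox n k ε (f ∘ g)),
          b (f ∘ g) (IsBoxMap.comp hg hf) hbox' = X.map g hg (b f hf hbox)) →
      (∀ {m : ℕ} (f : Cube m → Cube (n + 1)) (hf : IsBoxMap f) (hbox : InBox n k ε f),
          ComicallyMarked (n + 1) k ε f → X.marked (b f hf hbox)) →
      ∃ x : X.obj (n + 1), X.marked x ∧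
        ∀ {m : ℕ} (f : Cube m → Cube (n + 1)) (hf : IsBoxMap f) (hbox : InBox n k ε f),
          X.map f hf x = b f hf hbox
  ext : ∀ (n k : ℕ) (ε : Bool), 1 ≤ k → k ≤ n + 1 →
    ∀ x : X.obj (n + 1),
      (∀ {m : ℕ} (f : Cube m → Cube (n + 1)) (hf : IsBoxMap f),
        (ComicallyMarked (n + 1) k ε f ∨ (InBox n k ε f ∧ n ≤ m)) →
        X.marked (X.map f hf x)) →
      X.marked (X.map (face1 k ε) (face1_isBoxMap k ε) x)

/-- A `1`-cube of a marked cubical set is degenerate if it is of the form `z·σ₁`. -/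
def IsDegenOne (X : MCSet) (u : X.obj 1) : Prop :=
  ∃ z : X.obj 0, u = X.map (degen1 1) (degen1_isBoxMap 1) z

/-- Two `1`-cubes `f`, `g` of a marked cubical set are homotopic if there is a marked
`2`-cube having `f` on one face, `g` on the parallel face, and degenerate `1`-cubes on the
two remaining faces (in any one of the configurations listed in the paper). -/
def Homotopic (X : MCSet) (f g : X.obj 1) : Prop :=
  ∃ H : X.obj 2, X.marked H ∧
    ((((X.map (face1 1 false) (face1_isBoxMap 1 false) H = f ∧
        X.map (face1 1 true) (face1_isBoxMap 1 true) H = g) ∨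
       (X.map (face1 1 false) (face1_isBoxMap 1 false) H = g ∧
        X.map (face1 1 true) (face1_isBoxMap 1 true) H = f)) ∧
      IsDegenOne X (X.map (face1 2 false) (face1_isBoxMap 2 false) H) ∧
      IsDegenOne X (X.map (face1 2 true) (face1_isBoxMap 2 true) H)) ∨
     (((X.map (face1 2 false) (face1_isBoxMap 2 false) H = f ∧
        X.map (face1 2 true) (face1_isBoxMap 2 true) H = g) ∨
       (X.map (face1 2 false) (face1_isBoxMap 2 false) H = g ∧
        X.map (face1 2 true) (face1_isBoxMap 2 true) H = f)) ∧
      IsDegenOne X (X.map (face1 1 false) (face1_isBoxMap 1 false) H) ∧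
      IsDegenOne X (X.map (face1 1 true) (face1_isBoxMap 1 true) H)))

section Dev
variable {m n p q : ℕ}

instance : DecidableEq (Cube n) := inferInstanceAs (DecidableEq (Fin n → Bool))
instance : Fintype (Cube n) := inferInstanceAs (Fintype (Fin n → Bool))

lemma cube_nonempty (n : ℕ) : Nonempty (Cube n) := ⟨fun _ => false⟩

lemma toPt_unique {α : Sort*} (f g : α → Cube 0) : f = g :=
  funext fun x => funext fun i => i.elim0

lemma xmap_congr (X : MCSet) {f g : Cube m → Cube n} (h : f = g) (hf : IsBoxMap f)
    (hg : IsBoxMap g) (x : X.obj n) : X.map f hf x = X.map g hg x := by subst h; rfl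

lemma xmap_map (X : MCSet) (f : Cube m → Cube n) (hf : IsBoxMap f) (g : Cube n → Cube p)
    (hg : IsBoxMap g) (x : X.obj p) :
    X.map f hf (X.map g hg x) = X.map (g ∘ f) (IsBoxMap.comp hf hg) x :=
  (X.map_comp f hf g hg x).symm

lemma xmap_map' (X : MCSet) {f : Cube m → Cube n} {hf : IsBoxMap f} {g : Cube n → Cube p}
    {hg : IsBoxMap g} {h : Cube m → Cube p} (hcomp : g ∘ f = h) (hh : IsBoxMap h)
    (x : X.obj p) : X.map f hf (X.map g hg x) = X.map h hh x := by
  rw [xmap_map X f hf g hg x]; exact xmap_congr X hcomp _ _ x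

lemma xmap_id (X : MCSet) {f : Cube n → Cube n} (h : f = fun y => y) (hf : IsBoxMap f)
    (x : X.obj n) : X.map f hf x = x := by
  rw [xmap_congr X h hf IsBoxMap.id x, X.map_id]

/-! ### pointwise evaluation -/

lemma face_apply_lt (i : Fin (n+1)) (ε : Bool) (x : Cube n) (j : Fin (n+1))
    (h : j.val < i.val) : face i ε x j = x ⟨j.val, by omega⟩ := by
  have hs : i.succAbove ⟨j.val, by omega⟩ = j := by
    rw [Fin.succAbove]
    simp only [Fin.castSucc_mk, Fin.lt_def]
    rw [if_pos (by simpa using h)]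
  conv_lhs => rw [← hs]
  exact Fin.insertNth_apply_succAbove (α := fun _ => Bool) i ε x ⟨j.val, by omega⟩

lemma face_apply_eq (i : Fin (n+1)) (ε : Bool) (x : Cube n) (j : Fin (n+1))
    (h : j.val = i.val) : face i ε x j = ε := by
  have : j = i := Fin.ext h
  subst this
  exact Fin.insertNth_apply_same (α := fun _ => Bool) j ε x

lemma face_apply_gt (i : Fin (n+1)) (ε : Bool) (x : Cube n) (j : Fin (n+1))
    (h : i.val < j.val) : face i ε x j = x ⟨j.val - 1, by omega⟩ := by
  have hs : i.succAbove ⟨j.val - 1, by omega⟩ = j := by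
    rw [Fin.succAbove]
    simp only [Fin.castSucc_mk, Fin.lt_def]
    rw [if_neg (by simp; omega)]
    exact Fin.ext (by simp; omega)
  conv_lhs => rw [← hs]
  exact Fin.insertNth_apply_succAbove (α := fun _ => Bool) i ε x ⟨j.val - 1, by omega⟩

lemma degen_apply_lt (i : Fin (n+1)) (x : Cube (n+1)) (j : Fin n) (h : j.val < i.val) :
    degen i x j = x ⟨j.val, by omega⟩ := by
  show x (i.succAbove j) = _
  rw [Fin.succAbove, if_pos (by simpa [Fin.lt_def] using h)]
  rfl

lemma degen_apply_ge (i : Fin (n+1)) (x : Cube (n+1)) (j : Fin n) (h : i.val ≤ j.val) :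
    degen i x j = x ⟨j.val + 1, by omega⟩ := by
  show x (i.succAbove j) = _
  rw [Fin.succAbove, if_neg (by simp [Fin.lt_def]; omega)]
  rfl

lemma conn_apply_lt (i : Fin (n+1)) (ε : Bool) (x : Cube (n+2)) (j : Fin (n+1))
    (h : j.val < i.val) : conn i ε x j = x ⟨j.val, by omega⟩ := by
  show (if j.val < i.val then _ else _) = _
  rw [if_pos h]; rfl

lemma conn_apply_eq (i : Fin (n+1)) (ε : Bool) (x : Cube (n+2)) (j : Fin (n+1))
    (h : j.val = i.val) :
    conn i ε x j = (if ε then x ⟨i.val, by omega⟩ || x ⟨i.val + 1, by omega⟩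
      else x ⟨i.val, by omega⟩ && x ⟨i.val + 1, by omega⟩) := by
  show (if j.val < i.val then _ else _) = _
  rw [if_neg (by omega), if_pos h]
  rfl

lemma conn_apply_gt (i : Fin (n+1)) (ε : Bool) (x : Cube (n+2)) (j : Fin (n+1))
    (h : i.val < j.val) : conn i ε x j = x ⟨j.val + 1, by omega⟩ := by
  show (if j.val < i.val then _ else _) = _
  rw [if_neg (by omega), if_neg (by omega)]
  rfl

end Dev
section Dev2
variable {m n p q : ℕ}

@[simp] lemma fv {n a : ℕ} (h : a < n) : ((⟨a, h⟩ : Fin n) : ℕ) = a := rfl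

lemma cube_cg (x : Cube n) (a b : ℕ) (ha : a < n) (hb : b < n) (h : a = b) :
    x ⟨a, ha⟩ = x ⟨b, hb⟩ := by subst h; rfl

/-- σᵢ ∂ᵢ = id -/
lemma id_sf (i : Fin (n+1)) (ε : Bool) : degen i ∘ face i ε = (fun x : Cube n => x) := by
  funext x k
  simp only [Function.comp_apply]
  rcases Nat.lt_or_ge k.val i.val with hk | hk
  · rw [degen_apply_lt i _ k hk, face_apply_lt i ε x _ (by simpa using hk)]
  · rw [degen_apply_ge i _ k hk, face_apply_gt i ε x _ (by simp; omega)]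
    simp only [fv]
    exact cube_cg x _ _ _ _ (by omega)

/-- σᵢ ∂ⱼ = ∂_{j-1} σᵢ for i < j -/
lemma sf_lt (i j : Fin (n+2)) (ε : Bool) (hij : i.val < j.val) :
    degen i ∘ face j ε =
      face (n := n) ⟨j.val - 1, by omega⟩ ε ∘ degen (n := n) ⟨i.val, by omega⟩ := by
  funext x k
  simp only [Function.comp_apply]
  rcases Nat.lt_or_ge k.val i.val with hk | hk
  · rw [degen_apply_lt i _ k hk, face_apply_lt j ε x _ (by simp; omega),
      face_apply_lt _ ε _ k (by simp; omega), degen_apply_lt _ x _ (by simp; omega)]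
  · rw [degen_apply_ge i _ k hk]
    rcases Nat.lt_trichotomy (k.val + 1) j.val with h2 | h2 | h2
    · rw [face_apply_lt j ε x _ (by simpa using h2),
        face_apply_lt _ ε _ k (by simp; omega), degen_apply_ge _ x _ (by simp; omega)]
      try simp only [fv]
    · rw [face_apply_eq j ε x _ (by simpa using h2), face_apply_eq _ ε _ k (by simp; omega)]
    · rw [face_apply_gt j ε x _ (by simpa using h2),
        face_apply_gt _ ε _ k (by simp; omega), degen_apply_ge _ x _ (by simp; omega)]
      simp only [fv]
      exact cube_cg x _ _ _ _ (by omega)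

/-- σᵢ ∂ⱼ = ∂ⱼ σ_{i-1} for j < i -/
lemma sf_gt (i j : Fin (n+2)) (ε : Bool) (hij : j.val < i.val) :
    degen i ∘ face j ε =
      face (n := n) ⟨j.val, by omega⟩ ε ∘ degen (n := n) ⟨i.val - 1, by omega⟩ := by
  funext x k
  simp only [Function.comp_apply]
  rcases Nat.lt_or_ge k.val i.val with hk | hk
  · rw [degen_apply_lt i _ k hk]
    rcases Nat.lt_trichotomy k.val j.val with h2 | h2 | h2
    · rw [face_apply_lt j ε x _ (by simpa using h2), face_apply_lt _ ε _ k (by simpa using h2),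
        degen_apply_lt _ x _ (by simp; omega)]
      try simp only [fv]
    · rw [face_apply_eq j ε x _ (by simpa using h2), face_apply_eq _ ε _ k (by simpa using h2)]
    · rw [face_apply_gt j ε x _ (by simpa using h2), face_apply_gt _ ε _ k (by simpa using h2),
        degen_apply_lt _ x _ (by simp; omega)]
      try simp only [fv]
  · rw [degen_apply_ge i _ k hk, face_apply_gt j ε x _ (by simp; omega),
      face_apply_gt _ ε _ k (by simp; omega), degen_apply_ge _ x _ (by simp; omega)]
    simp only [fv]
    exact cube_cg x _ _ _ _ (by omega)

end Dev2
section Dev3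
set_option maxHeartbeats 1000000
variable {m n p q : ℕ}

lemma conn_apply_eq_t (i : Fin (n+1)) (x : Cube (n+2)) (j : Fin (n+1)) (h : j.val = i.val) :
    conn i true x j = (x ⟨i.val, by omega⟩ || x ⟨i.val + 1, by omega⟩) := by
  rw [conn_apply_eq i true x j h]; rfl

lemma conn_apply_eq_f (i : Fin (n+1)) (x : Cube (n+2)) (j : Fin (n+1)) (h : j.val = i.val) :
    conn i false x j = (x ⟨i.val, by omega⟩ && x ⟨i.val + 1, by omega⟩) := by
  rw [conn_apply_eq i false x j h]; rfl

/-- γᵢ ∂ⱼ = id for j ∈ {i, i+1}, opposite sign -/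
lemma id_gf (i : Fin (n+1)) (ε : Bool) (j : Fin (n+2))
    (h : j.val = i.val ∨ j.val = i.val + 1) :
    conn i ε ∘ face j (!ε) = (fun x : Cube (n+1) => x) := by
  funext x k
  simp only [Function.comp_apply]
  rcases Nat.lt_trichotomy k.val i.val with hk | hk | hk
  · rw [conn_apply_lt i ε _ k hk, face_apply_lt j _ x _ (by simp; omega)]
  · cases ε
    · rw [conn_apply_eq_f i _ k hk]
      rcases h with h | h
      · rw [face_apply_eq j _ x ⟨i.val, by omega⟩ (by simp; omega),
          face_apply_gt j _ x ⟨i.val + 1, by omega⟩ (by simp; omega)]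
        simp only [fv, Bool.not_false, Bool.true_and]
        exact cube_cg x _ _ _ _ (by omega)
      · rw [face_apply_lt j _ x ⟨i.val, by omega⟩ (by simp; omega),
          face_apply_eq j _ x ⟨i.val + 1, by omega⟩ (by simp; omega)]
        simp only [fv, Bool.not_false, Bool.and_true]
        exact cube_cg x _ _ _ _ (by omega)
    · rw [conn_apply_eq_t i _ k hk]
      rcases h with h | h
      · rw [face_apply_eq j _ x ⟨i.val, by omega⟩ (by simp; omega),
          face_apply_gt j _ x ⟨i.val + 1, by omega⟩ (by simp; omega)]
        simp only [fv, Bool.not_true, Bool.false_or]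
        exact cube_cg x _ _ _ _ (by omega)
      · rw [face_apply_lt j _ x ⟨i.val, by omega⟩ (by simp; omega),
          face_apply_eq j _ x ⟨i.val + 1, by omega⟩ (by simp; omega)]
        simp only [fv, Bool.not_true, Bool.or_false]
        exact cube_cg x _ _ _ _ (by omega)
  · rw [conn_apply_gt i ε _ k hk, face_apply_gt j _ x _ (by simp; omega)]
    simp only [fv]
    exact cube_cg x _ _ _ _ (by omega)

/-- γᵢ ∂ⱼ = ∂ᵢ σᵢ for j ∈ {i, i+1}, same sign -/
lemma abs_gf (i : Fin (n+1)) (ε : Bool) (j : Fin (n+2))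
    (h : j.val = i.val ∨ j.val = i.val + 1) :
    conn i ε ∘ face j ε = face (n := n) i ε ∘ degen i := by
  funext x k
  simp only [Function.comp_apply]
  rcases Nat.lt_trichotomy k.val i.val with hk | hk | hk
  · rw [conn_apply_lt i ε _ k hk, face_apply_lt j _ x _ (by simp; omega),
      face_apply_lt i ε _ k hk, degen_apply_lt i x _ (by simp; omega)]
  · rw [face_apply_eq i ε _ k hk]
    cases ε
    · rw [conn_apply_eq_f i _ k hk]
      rcases h with h | h
      · rw [face_apply_eq j _ x ⟨i.val, by omega⟩ (by simp; omega)]; simp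
      · rw [face_apply_eq j _ x ⟨i.val + 1, by omega⟩ (by simp; omega)]; simp
    · rw [conn_apply_eq_t i _ k hk]
      rcases h with h | h
      · rw [face_apply_eq j _ x ⟨i.val, by omega⟩ (by simp; omega)]; simp
      · rw [face_apply_eq j _ x ⟨i.val + 1, by omega⟩ (by simp; omega)]; simp
  · rw [conn_apply_gt i ε _ k hk, face_apply_gt j _ x _ (by simp; omega),
      face_apply_gt i ε _ k hk, degen_apply_ge i x _ (by simp; omega)]
    simp only [fv]
    exact cube_cg x _ _ _ _ (by omega)

/-- γᵢ ∂ⱼ = ∂ⱼ γ_{i-1} for j < i -/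
lemma gf_lt (i : Fin (n+2)) (ε : Bool) (j : Fin (n+3)) (δ : Bool) (h : j.val < i.val) :
    conn i ε ∘ face j δ =
      face (n := n+1) ⟨j.val, by omega⟩ δ ∘ conn (n := n) ⟨i.val - 1, by omega⟩ ε := by
  funext x k
  simp only [Function.comp_apply]
  rcases Nat.lt_trichotomy k.val i.val with hk | hk | hk
  · rw [conn_apply_lt i ε _ k hk]
    rcases Nat.lt_trichotomy k.val j.val with h2 | h2 | h2
    · rw [face_apply_lt j δ x _ (by simp; omega), face_apply_lt _ δ _ k (by simp; omega),
        conn_apply_lt _ ε x _ (by simp; omega)]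
      try simp only [fv]
    · rw [face_apply_eq j δ x _ (by simp; omega), face_apply_eq _ δ _ k (by simp; omega)]
    · rw [face_apply_gt j δ x _ (by simp; omega), face_apply_gt _ δ _ k (by simp; omega),
        conn_apply_lt _ ε x _ (by simp; omega)]
      try simp only [fv]
  · rw [face_apply_gt (n := n+1) ⟨j.val, by omega⟩ δ (conn ⟨i.val - 1, by omega⟩ ε x) k
      (by simp; omega)]
    cases ε
    · rw [conn_apply_eq_f i (face j δ x) k hk,
        conn_apply_eq_f ⟨i.val - 1, by omega⟩ x ⟨k.val - 1, by omega⟩ (by simp; omega),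
        face_apply_gt j δ x ⟨i.val, by omega⟩ (by simp; omega),
        face_apply_gt j δ x ⟨i.val + 1, by omega⟩ (by simp; omega)]
      simp only [fv]
      congr 1 <;> exact cube_cg x _ _ _ _ (by omega)
    · rw [conn_apply_eq_t i (face j δ x) k hk,
        conn_apply_eq_t ⟨i.val - 1, by omega⟩ x ⟨k.val - 1, by omega⟩ (by simp; omega),
        face_apply_gt j δ x ⟨i.val, by omega⟩ (by simp; omega),
        face_apply_gt j δ x ⟨i.val + 1, by omega⟩ (by simp; omega)]
      simp only [fv]
      congr 1 <;> exact cube_cg x _ _ _ _ (by omega)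
  · rw [conn_apply_gt i ε _ k hk, face_apply_gt j δ x _ (by simp; omega),
      face_apply_gt _ δ _ k (by simp; omega), conn_apply_gt _ ε x _ (by simp; omega)]
    simp only [fv]
    exact cube_cg x _ _ _ _ (by omega)

/-- γᵢ ∂ⱼ = ∂_{j-1} γᵢ for j > i+1 -/
lemma gf_gt (i : Fin (n+2)) (ε : Bool) (j : Fin (n+3)) (δ : Bool) (h : i.val + 1 < j.val) :
    conn i ε ∘ face j δ =
      face (n := n+1) ⟨j.val - 1, by omega⟩ δ ∘ conn (n := n) ⟨i.val, by omega⟩ ε := by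
  funext x k
  simp only [Function.comp_apply]
  rcases Nat.lt_trichotomy k.val i.val with hk | hk | hk
  · rw [conn_apply_lt i ε _ k hk, face_apply_lt j δ x _ (by simp; omega),
      face_apply_lt _ δ _ k (by simp; omega), conn_apply_lt _ ε x _ (by simp; omega)]
    try simp only [fv]
  · rw [face_apply_lt (n := n+1) ⟨j.val - 1, by omega⟩ δ (conn ⟨i.val, by omega⟩ ε x) k
      (by simp; omega)]
    cases ε
    · rw [conn_apply_eq_f i (face j δ x) k hk,
        conn_apply_eq_f ⟨i.val, by omega⟩ x ⟨k.val, by omega⟩ (by simp; omega),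
        face_apply_lt j δ x ⟨i.val, by omega⟩ (by simp; omega),
        face_apply_lt j δ x ⟨i.val + 1, by omega⟩ (by simp; omega)]
      try simp only [fv]
    · rw [conn_apply_eq_t i (face j δ x) k hk,
        conn_apply_eq_t ⟨i.val, by omega⟩ x ⟨k.val, by omega⟩ (by simp; omega),
        face_apply_lt j δ x ⟨i.val, by omega⟩ (by simp; omega),
        face_apply_lt j δ x ⟨i.val + 1, by omega⟩ (by simp; omega)]
      try simp only [fv]
  · rw [conn_apply_gt i ε _ k hk]
    rcases Nat.lt_trichotomy (k.val + 1) j.val with h2 | h2 | h2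
    · rw [face_apply_lt j δ x _ (by simp; omega), face_apply_lt _ δ _ k (by simp; omega),
        conn_apply_gt _ ε x _ (by simp; omega)]
      try simp only [fv]
    · rw [face_apply_eq j δ x _ (by simp; omega), face_apply_eq _ δ _ k (by simp; omega)]
    · rw [face_apply_gt j δ x _ (by simp; omega), face_apply_gt _ δ _ k (by simp; omega),
        conn_apply_gt _ ε x _ (by simp; omega)]
      simp only [fv]
      exact cube_cg x _ _ _ _ (by omega)

end Dev3
section Dev4
set_option maxHeartbeats 1000000
variable {m n p q : ℕ}

inductive FaceWord : {m n : ℕ} → (Cube m → Cube n) → Prop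
  | nil {n : ℕ} : FaceWord (fun x : Cube n => x)
  | cons {m n : ℕ} (i : Fin (n + 1)) (ε : Bool) {f : Cube m → Cube n} :
      FaceWord f → FaceWord (face i ε ∘ f)

inductive SingleC : {m n : ℕ} → (Cube m → Cube n) → Prop
  | degen {n : ℕ} (i : Fin (n + 1)) : SingleC (degen i)
  | conn {n : ℕ} (i : Fin (n + 1)) (ε : Bool) : SingleC (conn i ε)

inductive CollapseWord : {m n : ℕ} → (Cube m → Cube n) → Prop
  | nil {n : ℕ} : CollapseWord (fun x : Cube n => x)
  | cons {m p n : ℕ} {f : Cube p → Cube n} {c : Cube m → Cube p} :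
      CollapseWord f → SingleC c → CollapseWord (f ∘ c)

lemma FaceWord.isBoxMap {f : Cube m → Cube n} (h : FaceWord f) : IsBoxMap f := by
  induction h with
  | nil => exact IsBoxMap.id
  | cons i ε hf ih => exact IsBoxMap.comp ih (IsBoxMap.face i ε)

lemma SingleC.isBoxMap {f : Cube m → Cube n} (h : SingleC f) : IsBoxMap f := by
  cases h with
  | degen i => exact IsBoxMap.degen i
  | conn i ε => exact IsBoxMap.conn i ε

lemma CollapseWord.isBoxMap {f : Cube m → Cube n} (h : CollapseWord f) : IsBoxMap f := by
  induction h with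
  | nil => exact IsBoxMap.id
  | cons hf hc ih => exact IsBoxMap.comp hc.isBoxMap ih

lemma face_injective (i : Fin (n + 1)) (ε : Bool) : Function.Injective (face i ε) := by
  intro a b hab
  have : degen i (face i ε a) = degen i (face i ε b) := by rw [hab]
  rwa [show degen i (face i ε a) = a from congrFun (id_sf i ε) a,
    show degen i (face i ε b) = b from congrFun (id_sf i ε) b] at this

lemma FaceWord.injective {f : Cube m → Cube n} (h : FaceWord f) : Function.Injective f := by
  induction h with
  | nil => exact fun a b hab => hab
  | cons i ε hf ih => exact (face_injective i ε).comp ih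

lemma faceWord_comp_aux : ∀ {m n : ℕ} {f : Cube m → Cube n}, FaceWord f →
    ∀ {p : ℕ} {g : Cube p → Cube m}, FaceWord g → FaceWord (f ∘ g) := by
  intro m n f hf
  induction hf with
  | nil => intro p g hg; exact hg
  | cons i ε h ih =>
    intro p g hg
    have := FaceWord.cons i ε (ih hg)
    exact this

lemma FaceWord.comp {f : Cube m → Cube n} {g : Cube p → Cube m} (hf : FaceWord f)
    (hg : FaceWord g) : FaceWord (f ∘ g) := faceWord_comp_aux hf hg

lemma collapseWord_comp_aux : ∀ {p m : ℕ} {g : Cube p → Cube m}, CollapseWord g →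
    ∀ {n : ℕ} {f : Cube m → Cube n}, CollapseWord f → CollapseWord (f ∘ g) := by
  intro p m g hg
  induction hg with
  | nil => intro n f hf; exact hf
  | cons h1 h2 ih =>
    intro n f hf
    have := CollapseWord.cons (ih hf) h2
    exact this

lemma CollapseWord.comp {f : Cube m → Cube n} {g : Cube p → Cube m} (hf : CollapseWord f)
    (hg : CollapseWord g) : CollapseWord (f ∘ g) := collapseWord_comp_aux hg hf

lemma FaceWord.le_dim {f : Cube m → Cube n} (h : FaceWord f) :
    m ≤ n ∧ ∀ heq : m = n, ∀ x, f x = cubeCast heq x := by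
  induction h with
  | nil => exact ⟨le_refl _, fun _ _ => rfl⟩
  | @cons n' i ε f' hf ih =>
    obtain ⟨h1, _⟩ := ih
    refine ⟨by omega, fun hmn => ?_⟩
    exfalso; omega

/-- push a single collapse past a face word -/
lemma pushSingle {a b : ℕ} {F : Cube a → Cube b} (hF : FaceWord F) :
    ∀ {q : ℕ} {c : Cube b → Cube q}, SingleC c →
    ∃ (r : ℕ) (F' : Cube r → Cube q) (C' : Cube a → Cube r),
      FaceWord F' ∧ CollapseWord C' ∧ c ∘ F = F' ∘ C' := by
  induction hF with
  | nil =>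
    intro q c hc
    have hcw := CollapseWord.cons CollapseWord.nil hc
    exact ⟨q, fun x => x, c, FaceWord.nil, hcw, rfl⟩
  | @cons n' i ε f' hf' ih =>
    intro q c hc
    cases hc with
    | degen i₀ =>
      -- c = degen i₀ : Cube (n'+1) → Cube n', q = n'
      rcases Nat.lt_trichotomy i₀.val i.val with hlt | heq | hgt
      · -- n' ≥ 1
        obtain ⟨n'', rfl⟩ : ∃ k, n' = k + 1 := ⟨n' - 1, by omega⟩
        have key := sf_lt (n := n'') i₀ i ε hlt
        obtain ⟨r, F', C', h1, h2, h3⟩ := ih (SingleC.degen ⟨i₀.val, by omega⟩)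
        refine ⟨r, face ⟨i.val - 1, by omega⟩ ε ∘ F', C', FaceWord.cons _ _ h1, h2, ?_⟩
        calc degen i₀ ∘ (face i ε ∘ f')
            = (degen i₀ ∘ face i ε) ∘ f' := rfl
          _ = (face ⟨i.val - 1, by omega⟩ ε ∘ degen ⟨i₀.val, by omega⟩) ∘ f' := by rw [key]
          _ = face ⟨i.val - 1, by omega⟩ ε ∘ (degen ⟨i₀.val, by omega⟩ ∘ f') := rfl
          _ = face ⟨i.val - 1, by omega⟩ ε ∘ (F' ∘ C') := by rw [h3]
      · -- i₀ = i : cancel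
        have : i₀ = i := Fin.ext heq
        subst this
        refine ⟨_, f', fun x => x, hf', CollapseWord.nil, ?_⟩
        calc degen i₀ ∘ (face i₀ ε ∘ f') = (degen i₀ ∘ face i₀ ε) ∘ f' := rfl
          _ = f' := by rw [id_sf]; rfl
      · obtain ⟨n'', rfl⟩ : ∃ k, n' = k + 1 := ⟨n' - 1, by omega⟩
        have key := sf_gt (n := n'') i₀ i ε hgt
        obtain ⟨r, F', C', h1, h2, h3⟩ := ih (SingleC.degen ⟨i₀.val - 1, by omega⟩)
        refine ⟨r, face ⟨i.val, by omega⟩ ε ∘ F', C', FaceWord.cons _ _ h1, h2, ?_⟩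
        calc degen i₀ ∘ (face i ε ∘ f')
            = (degen i₀ ∘ face i ε) ∘ f' := rfl
          _ = face ⟨i.val, by omega⟩ ε ∘ (degen ⟨i₀.val - 1, by omega⟩ ∘ f') := by rw [key]; rfl
          _ = face ⟨i.val, by omega⟩ ε ∘ (F' ∘ C') := by rw [h3]
    | @conn n'' i₀ ε₀ =>
      -- c = conn i₀ ε₀ : Cube (n''+2) → Cube (n''+1), with n' = n''+1
      by_cases hji : i.val = i₀.val ∨ i.val = i₀.val + 1
      · by_cases hee : ε = ε₀
        · subst hee
          have key := abs_gf i₀ ε i hji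
          obtain ⟨r, F', C', h1, h2, h3⟩ := ih (SingleC.degen i₀)
          refine ⟨r, face i₀ ε ∘ F', C', FaceWord.cons _ _ h1, h2, ?_⟩
          calc conn i₀ ε ∘ (face i ε ∘ f') = (conn i₀ ε ∘ face i ε) ∘ f' := rfl
            _ = face i₀ ε ∘ (degen i₀ ∘ f') := by rw [key]; rfl
            _ = face i₀ ε ∘ (F' ∘ C') := by rw [h3]
        · have hne : ε = !ε₀ := by cases ε <;> cases ε₀ <;> simp_all
          subst hne
          have key := id_gf i₀ ε₀ i hji
          refine ⟨_, f', fun x => x, hf', CollapseWord.nil, ?_⟩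
          calc conn i₀ ε₀ ∘ (face i (!ε₀) ∘ f') = (conn i₀ ε₀ ∘ face i (!ε₀)) ∘ f' := rfl
            _ = f' := by rw [key]; rfl
      · rcases Nat.lt_trichotomy i.val i₀.val with hlt | heq | hgt
        · -- j < i case : i₀ ≥ 1 so n'' ≥ 1
          obtain ⟨n''', rfl⟩ : ∃ k, n'' = k + 1 := ⟨n'' - 1, by omega⟩
          have key := gf_lt (n := n''') i₀ ε₀ i ε hlt
          obtain ⟨r, F', C', h1, h2, h3⟩ := ih (SingleC.conn ⟨i₀.val - 1, by omega⟩ ε₀)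
          refine ⟨r, face ⟨i.val, by omega⟩ ε ∘ F', C', FaceWord.cons _ _ h1, h2, ?_⟩
          calc conn i₀ ε₀ ∘ (face i ε ∘ f') = (conn i₀ ε₀ ∘ face i ε) ∘ f' := rfl
            _ = face ⟨i.val, by omega⟩ ε ∘ (conn ⟨i₀.val - 1, by omega⟩ ε₀ ∘ f') := by rw [key]; rfl
            _ = face ⟨i.val, by omega⟩ ε ∘ (F' ∘ C') := by rw [h3]
        · exact absurd (Or.inl heq) hji
        · have hgt' : i₀.val + 1 < i.val := by
            rcases Nat.lt_or_ge (i₀.val + 1) i.val with h' | h'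
            · exact h'
            · exact absurd (Or.inr (by omega)) hji
          obtain ⟨n''', rfl⟩ : ∃ k, n'' = k + 1 := ⟨n'' - 1, by omega⟩
          have key := gf_gt (n := n''') i₀ ε₀ i ε hgt'
          obtain ⟨r, F', C', h1, h2, h3⟩ := ih (SingleC.conn ⟨i₀.val, by omega⟩ ε₀)
          refine ⟨r, face ⟨i.val - 1, by omega⟩ ε ∘ F', C', FaceWord.cons _ _ h1, h2, ?_⟩
          calc conn i₀ ε₀ ∘ (face i ε ∘ f') = (conn i₀ ε₀ ∘ face i ε) ∘ f' := rfl
            _ = face ⟨i.val - 1, by omega⟩ ε ∘ (conn ⟨i₀.val, by omega⟩ ε₀ ∘ f') := by rw [key]; rfl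
            _ = face ⟨i.val - 1, by omega⟩ ε ∘ (F' ∘ C') := by rw [h3]

/-- push a collapse word past a face word -/
lemma pushCW {b q : ℕ} {C : Cube b → Cube q} (hC : CollapseWord C) :
    ∀ {a : ℕ} {F : Cube a → Cube b}, FaceWord F →
    ∃ (r : ℕ) (F' : Cube r → Cube q) (C' : Cube a → Cube r),
      FaceWord F' ∧ CollapseWord C' ∧ C ∘ F = F' ∘ C' := by
  induction hC with
  | nil => intro a F hF; exact ⟨a, F, fun x => x, hF, CollapseWord.nil, rfl⟩
  | @cons mm pp nn f c hf hc ih =>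
    intro a F hF
    obtain ⟨r1, F1, C1, hF1, hC1, he1⟩ := pushSingle hF hc
    obtain ⟨r2, F2, C2, hF2, hC2, he2⟩ := ih hF1
    refine ⟨r2, F2, C2 ∘ C1, hF2, hC2.comp hC1, ?_⟩
    calc (f ∘ c) ∘ F = f ∘ (c ∘ F) := rfl
      _ = f ∘ (F1 ∘ C1) := by rw [he1]
      _ = (f ∘ F1) ∘ C1 := rfl
      _ = (F2 ∘ C2) ∘ C1 := by rw [he2]
      _ = F2 ∘ (C2 ∘ C1) := rfl

/-- normal form: every box map is a face word after a collapse word -/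
lemma boxMap_nf {f : Cube m → Cube n} (hf : IsBoxMap f) :
    ∃ (r : ℕ) (F : Cube r → Cube n) (C : Cube m → Cube r),
      FaceWord F ∧ CollapseWord C ∧ f = F ∘ C := by
  induction hf with
  | id => exact ⟨_, fun x => x, fun x => x, FaceWord.nil, CollapseWord.nil, rfl⟩
  | face i ε => exact ⟨_, face i ε, fun x => x, FaceWord.cons i ε FaceWord.nil,
      CollapseWord.nil, rfl⟩
  | degen i => exact ⟨_, fun x => x, degen i, FaceWord.nil,
      CollapseWord.cons CollapseWord.nil (SingleC.degen i), rfl⟩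
  | conn i ε => exact ⟨_, fun x => x, conn i ε, FaceWord.nil,
      CollapseWord.cons CollapseWord.nil (SingleC.conn i ε), rfl⟩
  | @comp m' n' k' f' g' hf' hg' ihf ihg =>
    obtain ⟨r1, F1, C1, hF1, hC1, he1⟩ := ihf
    obtain ⟨r2, F2, C2, hF2, hC2, he2⟩ := ihg
    obtain ⟨r3, F3, C3, hF3, hC3, he3⟩ := pushCW hC2 hF1
    refine ⟨r3, F2 ∘ F3, C3 ∘ C1, hF2.comp hF3, hC3.comp hC1, ?_⟩
    calc g' ∘ f' = (F2 ∘ C2) ∘ (F1 ∘ C1) := by rw [he1, he2]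
      _ = F2 ∘ ((C2 ∘ F1) ∘ C1) := rfl
      _ = F2 ∘ ((F3 ∘ C3) ∘ C1) := by rw [he3]
      _ = (F2 ∘ F3) ∘ (C3 ∘ C1) := rfl

end Dev4
section Dev5
set_option maxHeartbeats 1000000
variable {m n p q : ℕ}

lemma card_cube (n : ℕ) : Fintype.card (Cube n) = 2 ^ n := by
  show Fintype.card (Fin n → Bool) = 2 ^ n
  simp

lemma inj_dim_le {f : Cube m → Cube n} (hf : Function.Injective f) : m ≤ n := by
  have := Fintype.card_le_of_injective f hf
  rw [card_cube, card_cube] at this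
  exact (Nat.pow_le_pow_iff_right (by norm_num)).mp this

lemma singleC_noninj {c : Cube m → Cube n} (hc : SingleC c) : ¬ Function.Injective c := by
  intro hinj
  have hmn : n + 1 ≤ m := by
    cases hc with
    | degen i => omega
    | conn i ε => omega
  have := inj_dim_le hinj
  omega

lemma collapse_inj_cast {C : Cube m → Cube n} (hC : CollapseWord C)
    (hinj : Function.Injective C) : ∃ e : m = n, ∀ x, C x = cubeCast e x := by
  cases hC with
  | nil => exact ⟨rfl, fun _ => rfl⟩
  | cons h1 h2 =>
    exfalso
    exact singleC_noninj h2 (fun a b hab => (Function.Injective.of_comp hinj) hab)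

/-- non-injective collapse word gives marked images -/
lemma marked_collapse (X : MCSet) {C : Cube m → Cube p} (hC : CollapseWord C)
    (hni : ¬ Function.Injective C) (outer : Cube p → Cube q) (houter : IsBoxMap outer)
    (hbm : IsBoxMap (outer ∘ C)) (z : X.obj q) : X.marked (X.map (outer ∘ C) hbm z) := by
  cases hC with
  | nil => exact absurd (fun a b hab => hab) hni
  | @cons mm pp nn f c h1 h2 =>
    have assoc : outer ∘ (f ∘ c) = (outer ∘ f) ∘ c := rfl
    rw [xmap_congr X assoc hbm (IsBoxMap.comp h2.isBoxMap (IsBoxMap.comp h1.isBoxMap houter))]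
    rw [X.map_comp c h2.isBoxMap (outer ∘ f) (IsBoxMap.comp h1.isBoxMap houter) z]
    cases h2 with
    | degen i => exact X.marked_degen i _
    | conn i ε => exact X.marked_conn i ε _

lemma marked_of_noninj (X : MCSet) {f : Cube m → Cube n} (hf : IsBoxMap f)
    (hni : ¬ Function.Injective f) (z : X.obj n) : X.marked (X.map f hf z) := by
  obtain ⟨r, F, C, hF, hC, he⟩ := boxMap_nf hf
  have hniC : ¬ Function.Injective C := by
    intro hCinj
    exact hni (by rw [he]; exact hF.injective.comp hCinj)
  rw [xmap_congr X he hf (IsBoxMap.comp hC.isBoxMap hF.isBoxMap)]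
  exact marked_collapse X hC hniC F hF.isBoxMap _ z

lemma inj_endo_id {f : Cube n → Cube n} (hf : IsBoxMap f) (hinj : Function.Injective f) :
    f = fun x => x := by
  obtain ⟨r, F, C, hF, hC, he⟩ := boxMap_nf hf
  have hCinj : Function.Injective C := by
    intro a b hab
    apply hinj
    rw [he]; show F (C a) = F (C b); rw [hab]
  obtain ⟨e, hCC⟩ := collapse_inj_cast hC hCinj
  subst e
  obtain ⟨hle, heq⟩ := hF.le_dim
  funext x
  rw [he]
  show F (C x) = x
  rw [hCC x]
  have : F (cubeCast rfl x) = F x := rfl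
  rw [this, heq rfl x]
  rfl

end Dev5
section Dev6
set_option maxHeartbeats 1000000

lemma face1_coord3 (j : ℕ) (δ : Bool) (h1 : 1 ≤ j) (h2 : j ≤ 3) (y : Cube 2) :
    face1 j δ y ⟨j - 1, by omega⟩ = δ := by
  have hj : j = 1 ∨ j = 2 ∨ j = 3 := by omega
  rcases hj with rfl | rfl | rfl
  · exact (by decide : ∀ (δ : Bool) (y : Cube 2), face1 1 δ y (0 : Fin 3) = δ) δ y
  · exact (by decide : ∀ (δ : Bool) (y : Cube 2), face1 2 δ y (1 : Fin 3) = δ) δ y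
  · exact (by decide : ∀ (δ : Bool) (y : Cube 2), face1 3 δ y (2 : Fin 3) = δ) δ y

lemma face1_coord2 (j : ℕ) (δ : Bool) (h1 : 1 ≤ j) (h2 : j ≤ 2) (y : Cube 1) :
    face1 j δ y ⟨j - 1, by omega⟩ = δ := by
  have hj : j = 1 ∨ j = 2 := by omega
  rcases hj with rfl | rfl
  · exact (by decide : ∀ (δ : Bool) (y : Cube 1), face1 1 δ y (0 : Fin 2) = δ) δ y
  · exact (by decide : ∀ (δ : Bool) (y : Cube 1), face1 2 δ y (1 : Fin 2) = δ) δ y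

lemma face1_coord_lt (j j' : ℕ) (δ : Bool) (h : 1 ≤ j') (hlt : j' < j) (h2 : j ≤ 3)
    (y : Cube 2) :
    face1 j δ y ⟨j' - 1, by omega⟩ = y ⟨j' - 1, by omega⟩ := by
  have hj : (j' = 1 ∧ j = 2) ∨ (j' = 1 ∧ j = 3) ∨ (j' = 2 ∧ j = 3) := by omega
  rcases hj with ⟨rfl, rfl⟩ | ⟨rfl, rfl⟩ | ⟨rfl, rfl⟩
  · exact (by decide : ∀ (δ : Bool) (y : Cube 2), face1 2 δ y (0 : Fin 3) = y (0 : Fin 2)) δ y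
  · exact (by decide : ∀ (δ : Bool) (y : Cube 2), face1 3 δ y (0 : Fin 3) = y (0 : Fin 2)) δ y
  · exact (by decide : ∀ (δ : Bool) (y : Cube 2), face1 3 δ y (1 : Fin 3) = y (1 : Fin 2)) δ y

lemma face1_recon (j' : ℕ) (δ' : Bool) (h1 : 1 ≤ j') (h2 : j' ≤ 2) (y : Cube 2)
    (hy : y ⟨j' - 1, by omega⟩ = δ') : face1 j' δ' (degen1 j' y) = y := by
  have hj : j' = 1 ∨ j' = 2 := by omega
  rcases hj with rfl | rfl
  · exact (by decide : ∀ (δ' : Bool) (y : Cube 2), y (0 : Fin 2) = δ' →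
      face1 1 δ' (degen1 1 y) = y) δ' y hy
  · exact (by decide : ∀ (δ' : Bool) (y : Cube 2), y (1 : Fin 2) = δ' →
      face1 2 δ' (degen1 2 y) = y) δ' y hy

lemma face1_inj3 (j : ℕ) (δ : Bool) (h1 : 1 ≤ j) (h2 : j ≤ 3) :
    Function.Injective (face1 (n := 2) j δ) := by
  have hj : j = 1 ∨ j = 2 ∨ j = 3 := by omega
  intro a b hab
  rcases hj with rfl | rfl | rfl
  · exact (by decide : ∀ (δ : Bool) (a b : Cube 2), face1 1 δ a = face1 1 δ b → a = b) δ a b hab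
  · exact (by decide : ∀ (δ : Bool) (a b : Cube 2), face1 2 δ a = face1 2 δ b → a = b) δ a b hab
  · exact (by decide : ∀ (δ : Bool) (a b : Cube 2), face1 3 δ a = face1 3 δ b → a = b) δ a b hab

lemma face1_comm (j j' : ℕ) (δ δ' : Bool) (h1 : 1 ≤ j') (hlt : j' < j) (h2 : j ≤ 3) :
    (face1 (n := 2) j δ) ∘ (face1 (n := 1) j' δ') =
      (face1 (n := 2) j' δ') ∘ (face1 (n := 1) (j - 1) δ) := by
  have hj : (j' = 1 ∧ j = 2) ∨ (j' = 1 ∧ j = 3) ∨ (j' = 2 ∧ j = 3) := by omega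
  rcases hj with ⟨rfl, rfl⟩ | ⟨rfl, rfl⟩ | ⟨rfl, rfl⟩
  · exact (by decide : ∀ (δ δ' : Bool), (face1 (n := 2) 2 δ) ∘ (face1 (n := 1) 1 δ') =
      (face1 (n := 2) 1 δ') ∘ (face1 (n := 1) 1 δ)) δ δ'
  · exact (by decide : ∀ (δ δ' : Bool), (face1 (n := 2) 3 δ) ∘ (face1 (n := 1) 1 δ') =
      (face1 (n := 2) 1 δ') ∘ (face1 (n := 1) 2 δ)) δ δ'
  · exact (by decide : ∀ (δ δ' : Bool), (face1 (n := 2) 3 δ) ∘ (face1 (n := 1) 2 δ') =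
      (face1 (n := 2) 2 δ') ∘ (face1 (n := 1) 2 δ)) δ δ'

lemma k_mem_avoid (k : ℕ) (ε e : Bool) : ((k : ℕ), e) ∈ avoidSet k ε := by
  cases e <;> cases ε <;> simp [avoidSet]

lemma notin_avoid_ne {k : ℕ} {ε : Bool} {j : ℕ} {δ : Bool} (h : (j, δ) ∉ avoidSet k ε) :
    (j, δ) ≠ (k, ε) := by
  intro he
  rw [he] at h
  exact h (k_mem_avoid k ε ε)

end Dev6
section Dev7
set_option maxHeartbeats 1000000

lemma WD3 (X : MCSet) (k : ℕ) (ε : Bool) (F : ℕ → Bool → X.obj 2)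
    (compat : ∀ j' δ' j δ, 1 ≤ j' → j' < j → j ≤ 3 → (j', δ') ≠ (k, ε) → (j, δ) ≠ (k, ε) →
      X.map (face1 j' δ') (face1_isBoxMap j' δ') (F j δ) =
        X.map (face1 (j - 1) δ) (face1_isBoxMap (j - 1) δ) (F j' δ')) :
    ∀ {m : ℕ} (g g' : Cube m → Cube 2) (hg : IsBoxMap g) (hg' : IsBoxMap g')
      (j : ℕ) (δ : Bool) (j' : ℕ) (δ' : Bool),
      1 ≤ j → j ≤ 3 → (j, δ) ≠ (k, ε) → 1 ≤ j' → j' ≤ 3 → (j', δ') ≠ (k, ε) →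
      (face1 (n := 2) j δ) ∘ g = (face1 (n := 2) j' δ') ∘ g' →
      X.map g hg (F j δ) = X.map g' hg' (F j' δ') := by
  have aux : ∀ {m : ℕ} (g g' : Cube m → Cube 2) (hg : IsBoxMap g) (hg' : IsBoxMap g')
      (j : ℕ) (δ : Bool) (j' : ℕ) (δ' : Bool),
      1 ≤ j' → j' < j → j ≤ 3 → (j, δ) ≠ (k, ε) → (j', δ') ≠ (k, ε) →
      (face1 (n := 2) j δ) ∘ g = (face1 (n := 2) j' δ') ∘ g' →
      X.map g hg (F j δ) = X.map g' hg' (F j' δ') := by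
    intro m g g' hg hg' j δ j' δ' hj'1 hlt hj3 hne hne' heq
    have key : ∀ xx : Cube m, (g xx) ⟨j' - 1, by omega⟩ = δ' := by
      intro xx
      have h1 := congrFun heq xx
      have h2 : face1 j δ (g xx) ⟨j' - 1, by omega⟩ = (g xx) ⟨j' - 1, by omega⟩ :=
        face1_coord_lt j j' δ hj'1 hlt hj3 (g xx)
      have h3 : face1 j' δ' (g' xx) ⟨j' - 1, by omega⟩ = δ' :=
        face1_coord3 j' δ' hj'1 (by omega) (g' xx)
      rw [← h2]
      show (face1 j δ ∘ g) xx ⟨j' - 1, by omega⟩ = δ'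
      rw [heq]
      exact h3
    have hhb : IsBoxMap (degen1 j' ∘ g) := IsBoxMap.comp hg (degen1_isBoxMap j')
    have factor : g = face1 j' δ' ∘ (degen1 j' ∘ g) := by
      funext xx
      exact (face1_recon j' δ' hj'1 (by omega) (g xx) (key xx)).symm
    have comm := face1_comm j j' δ δ' hj'1 hlt hj3
    have g'eq : g' = face1 (j - 1) δ ∘ (degen1 j' ∘ g) := by
      funext xx
      apply face1_inj3 j' δ' hj'1 (by omega)
      show (face1 j' δ' ∘ g') xx = _
      rw [← heq]
      show face1 j δ (g xx) = face1 j' δ' (face1 (j - 1) δ (degen1 j' (g xx)))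
      conv_lhs => rw [factor]
      exact congrFun comm (degen1 j' (g xx))
    calc X.map g hg (F j δ)
        = X.map (face1 j' δ' ∘ (degen1 j' ∘ g))
            (IsBoxMap.comp hhb (face1_isBoxMap j' δ')) (F j δ) :=
          xmap_congr X factor hg _ (F j δ)
      _ = X.map (degen1 j' ∘ g) hhb
            (X.map (face1 j' δ') (face1_isBoxMap j' δ') (F j δ)) :=
          X.map_comp _ hhb (face1 j' δ') (face1_isBoxMap j' δ') (F j δ)
      _ = X.map (degen1 j' ∘ g) hhb
            (X.map (face1 (j - 1) δ) (face1_isBoxMap (j - 1) δ) (F j' δ')) := by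
          rw [compat j' δ' j δ hj'1 hlt hj3 hne' hne]
      _ = X.map (face1 (j - 1) δ ∘ (degen1 j' ∘ g))
            (IsBoxMap.comp hhb (face1_isBoxMap (j - 1) δ)) (F j' δ') :=
          (X.map_comp _ hhb (face1 (j - 1) δ) (face1_isBoxMap (j - 1) δ) (F j' δ')).symm
      _ = X.map g' hg' (F j' δ') := (xmap_congr X g'eq hg' _ (F j' δ')).symm
  intro m g g' hg hg' j δ j' δ' hj1 hj3 hne hj'1 hj'3 hne' heq
  rcases Nat.lt_trichotomy j j' with hlt | hjj | hgt
  · exact (aux g' g hg' hg j' δ' j δ hj1 hlt hj'3 hne' hne heq.symm).symm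
  · subst hjj
    by_cases hdd : δ = δ'
    · subst hdd
      have : g = g' := by
        funext xx
        exact face1_inj3 j δ hj1 hj3 (congrFun heq xx)
      subst this
      rfl
    · exfalso
      have xx : Cube m := fun _ => false
      have h1 : face1 j δ (g xx) ⟨j - 1, by omega⟩ = δ :=
        face1_coord3 j δ hj1 hj3 (g xx)
      have h2 : face1 j δ' (g' xx) ⟨j - 1, by omega⟩ = δ' :=
        face1_coord3 j δ' hj1 hj3 (g' xx)
      apply hdd
      rw [← h1, ← h2]
      show (face1 j δ ∘ g) xx _ = (face1 j δ' ∘ g') xx _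
      rw [heq]
  · exact aux g g' hg hg' j δ j' δ' hj'1 hgt hj3 hne hne' heq
end Dev7
section Dev8
set_option maxHeartbeats 1000000

lemma cm_cases (k : ℕ) (ε : Bool) (hk1 : 1 ≤ k) (hk3 : k ≤ 3) {m : ℕ} {f : Cube m → Cube 3}
    (hld : ∃ (ld : List (ℕ × Bool)) (h : 3 = m + ld.length),
      deltaValid ld m ∧ (ld.map Prod.fst).Chain' (· > ·) ∧
      (∀ pr ∈ ld, pr ∉ avoidSet k ε) ∧
      (∀ x : Cube m, f x = cubeCast h.symm (deltaWord ld x))) :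
    (∃ e : m = 3, ∀ x, f x = cubeCast e x) ∨
    (∃ (e : m = 2) (p : ℕ) (eb : Bool), 1 ≤ p ∧ p ≤ 3 ∧ (p, eb) ∉ avoidSet k ε ∧
      ∀ x, f x = face1 p eb (cubeCast e x)) ∨
    (∃ (e : m = 1) (p1 p2 : ℕ) (e1 e2 : Bool), 1 ≤ p2 ∧ p2 < p1 ∧ p1 ≤ 3 ∧ p2 ≤ 2 ∧
      (p1, e1) ∉ avoidSet k ε ∧ (p2, e2) ∉ avoidSet k ε ∧
      ∀ x, f x = face1 p1 e1 (face1 p2 e2 (cubeCast e x))) := by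
  obtain ⟨ld, h, hvalid, hchain, havoid, hfx⟩ := hld
  rcases ld with _ | ⟨⟨p1, e1⟩, ld2⟩
  · left
    have hm : m = 3 := by simp at h; omega
    subst hm
    exact ⟨rfl, fun x => hfx x⟩
  · rcases ld2 with _ | ⟨⟨p2, e2⟩, ld3⟩
    · right; left
      have hm : m = 2 := by simp at h; omega
      subst hm
      obtain ⟨hv1, hv2, -⟩ := hvalid
      refine ⟨rfl, p1, e1, hv1, by simpa using hv2, havoid _ (by simp), fun x => ?_⟩
      exact hfx x
    · rcases ld3 with _ | ⟨⟨p3, e3⟩, ld4⟩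
      · right; right
        have hm : m = 1 := by simp at h; omega
        subst hm
        obtain ⟨hv1, hv2, hv3, hv4, -⟩ := hvalid
        have hch : p1 > p2 := by
          simp only [List.Chain', List.map_cons, List.map_nil, List.isChain_cons_cons, List.isChain_singleton,
            and_true] at hchain
          exact hchain
        refine ⟨rfl, p1, p2, e1, e2, hv3, hch, by simpa using hv2, by simpa using hv4,
          havoid _ (by simp), havoid _ (by simp), fun x => ?_⟩
        exact hfx x
      · exfalso
        rcases ld4 with _ | ⟨pr5, ld5⟩
        · have hm : m = 0 := by simp at h; omega
          subst hm
          obtain ⟨hv1, hv2, hv3, hv4, hv5, hv6, -⟩ := hvalid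
          simp only [List.length_cons, List.length_nil] at hv2 hv4 hv6
          have hch : p1 > p2 ∧ p2 > p3 := by
            simp only [List.Chain', List.map_cons, List.map_nil, List.isChain_cons_cons, List.isChain_singleton,
              and_true] at hchain
            exact hchain
          have hp3 : p3 = 1 := by omega
          have hp2 : p2 = 2 := by omega
          have hp1 : p1 = 3 := by omega
          have hk : k = p1 ∨ k = p2 ∨ k = p3 := by omega
          rcases hk with rfl | rfl | rfl
          · exact havoid _ (by simp) (k_mem_avoid k ε e1)
          · exact havoid _ (by simp) (k_mem_avoid k ε e2)
          · exact havoid _ (by simp) (k_mem_avoid k ε e3)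
        · simp at h; omega

lemma fill3 (X : MCSet) (hX : IsComical X) (k : ℕ) (ε : Bool) (hk1 : 1 ≤ k) (hk3 : k ≤ 3)
    (F : ℕ → Bool → X.obj 2)
    (compat : ∀ j' δ' j δ, 1 ≤ j' → j' < j → j ≤ 3 → (j', δ') ≠ (k, ε) → (j, δ) ≠ (k, ε) →
      X.map (face1 j' δ') (face1_isBoxMap j' δ') (F j δ) =
        X.map (face1 (j - 1) δ) (face1_isBoxMap (j - 1) δ) (F j' δ'))
    (hmarked : ∀ j δ, 1 ≤ j → j ≤ 3 → (j, δ) ≠ (k, ε) → X.marked (F j δ))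
    (hedges : ∀ j δ j' δ', 1 ≤ j' → j' < j → j ≤ 3 → (j, δ) ∉ avoidSet k ε →
      (j', δ') ∉ avoidSet k ε →
      X.marked (X.map (face1 j' δ') (face1_isBoxMap j' δ') (F j δ))) :
    ∃ x : X.obj 3, X.marked x ∧
      (∀ j δ, 1 ≤ j → j ≤ 3 → (j, δ) ≠ (k, ε) →
        X.map (face1 j δ) (face1_isBoxMap j δ) x = F j δ) ∧
      X.marked (X.map (face1 k ε) (face1_isBoxMap k ε) x) := by
  have bval : ∀ {m : ℕ} (f : Cube m → Cube 3) (hbox : InBox 2 k ε f) (j : ℕ) (δ : Bool)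
      (g : Cube m → Cube 2) (hg : IsBoxMap g), 1 ≤ j → j ≤ 3 → (j, δ) ≠ (k, ε) →
      f = face1 j δ ∘ g →
      X.map hbox.choose_spec.choose_spec.choose hbox.choose_spec.choose_spec.choose_spec.1
        (F hbox.choose hbox.choose_spec.choose) = X.map g hg (F j δ) := by
    intro m f hbox j δ g hg h1 h2 h3 hfe
    have spec := hbox.choose_spec.choose_spec.choose_spec
    exact WD3 X k ε F compat _ g spec.1 hg hbox.choose hbox.choose_spec.choose j δ
      spec.2.1 spec.2.2.1 spec.2.2.2.1 h1 h2 h3 (by rw [← spec.2.2.2.2, ← hfe])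
  obtain ⟨x, hxm, hxb⟩ := hX.fill 2 k ε hk1 (by omega)
    (fun {m} f hf hbox =>
      X.map hbox.choose_spec.choose_spec.choose hbox.choose_spec.choose_spec.choose_spec.1
        (F hbox.choose hbox.choose_spec.choose))
    (by
      intro m m' g hg f hf hbox hbox'
      beta_reduce
      obtain ⟨j₀, δ₀, g₀, hg₀, hj1, hj3, hne, hfe⟩ := id hbox
      have e1 := bval (f ∘ g) hbox' j₀ δ₀ (g₀ ∘ g) (IsBoxMap.comp hg hg₀) hj1 hj3 hne
        (by rw [hfe]; rfl)
      have e2 := bval f hbox j₀ δ₀ g₀ hg₀ hj1 hj3 hne hfe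
      rw [e1, e2]
      exact X.map_comp g hg g₀ hg₀ (F j₀ δ₀)
    )
    (by
      intro m f hf hbox hcm
      beta_reduce
      rcases hcm with hni | hld
      · obtain ⟨j₀, δ₀, g₀, hg₀, hj1, hj3, hne, hfe⟩ := id hbox
        rw [bval f hbox j₀ δ₀ g₀ hg₀ hj1 hj3 hne hfe]
        apply marked_of_noninj X hg₀ _ (F j₀ δ₀)
        intro hginj
        apply hni
        intro a b hab
        apply hginj
        have : face1 j₀ δ₀ (g₀ a) = face1 j₀ δ₀ (g₀ b) := by
          show (face1 j₀ δ₀ ∘ g₀) a = (face1 j₀ δ₀ ∘ g₀) b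
          rw [← hfe, hab]
        exact face1_inj3 j₀ δ₀ hj1 hj3 this
      · rcases cm_cases k ε hk1 hk3 hld with ⟨e, hfx⟩ |
          ⟨e, p, eb, hp1, hp3, hav, hfx⟩ |
          ⟨e, p1, p2, e1, e2, hp21, hp12, hp13, hp22, hav1, hav2, hfx⟩
        · exfalso
          subst e
          obtain ⟨j₀, δ₀, g₀, hg₀, hj1, hj3, hne, hfe⟩ := id hbox
          have h1 : f (fun _ => !δ₀) = (fun _ => !δ₀) := hfx _
          have h2 : f (fun _ => !δ₀) ⟨j₀ - 1, by omega⟩ = δ₀ := by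
            have := congrFun hfe (fun _ => !δ₀)
            rw [this]
            exact face1_coord3 j₀ δ₀ hj1 hj3 _
          rw [h1] at h2
          simp at h2
        · subst e
          have hfe : f = face1 p eb := funext fun xx => hfx xx
          rw [bval f hbox p eb (fun q => q) IsBoxMap.id hp1 hp3 (notin_avoid_ne hav)
            (by rw [hfe]; rfl)]
          rw [xmap_id X rfl IsBoxMap.id (F p eb)]
          exact hmarked p eb hp1 hp3 (notin_avoid_ne hav)
        · subst e
          have hfe : f = face1 p1 e1 ∘ face1 p2 e2 := funext fun xx => hfx xx
          rw [bval f hbox p1 e1 (face1 p2 e2) (face1_isBoxMap p2 e2) (by omega) hp13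
            (notin_avoid_ne hav1) hfe]
          exact hedges p1 e1 p2 e2 hp21 hp12 hp13 hav1 hav2
    )
  have hfaces : ∀ j δ, 1 ≤ j → j ≤ 3 → (j, δ) ≠ (k, ε) →
      X.map (face1 j δ) (face1_isBoxMap j δ) x = F j δ := by
    intro j δ h1 h2 hne
    have hbox : InBox 2 k ε (face1 j δ) := ⟨j, δ, fun q => q, IsBoxMap.id, h1, h2, hne, rfl⟩
    refine (hxb (face1 j δ) (face1_isBoxMap j δ) hbox).trans ?_
    refine (bval (face1 j δ) hbox j δ (fun q => q) IsBoxMap.id h1 h2 hne rfl).trans ?_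
    exact xmap_id X rfl IsBoxMap.id (F j δ)
  refine ⟨x, hxm, hfaces, ?_⟩
  apply hX.ext 2 k ε hk1 (by omega) x
  intro m f hf hor
  by_cases hinj : Function.Injective f
  · rcases hor with hcm2 | ⟨hbox, hm2⟩
    · rcases hcm2 with hni | hld
      · exact absurd hinj hni
      · rcases cm_cases k ε hk1 hk3 hld with ⟨e, hfx⟩ |
          ⟨e, p, eb, hp1, hp3, hav, hfx⟩ |
          ⟨e, p1, p2, e1, e2, hp21, hp12, hp13, hp22, hav1, hav2, hfx⟩
        · subst e
          rw [xmap_id X (funext fun xx => hfx xx) hf x]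
          exact hxm
        · subst e
          have hfe : f = face1 p eb := funext fun xx => hfx xx
          rw [xmap_congr X hfe hf (face1_isBoxMap p eb),
            hfaces p eb hp1 hp3 (notin_avoid_ne hav)]
          exact hmarked p eb hp1 hp3 (notin_avoid_ne hav)
        · subst e
          have hfe : f = face1 p1 e1 ∘ face1 p2 e2 := funext fun xx => hfx xx
          rw [xmap_congr X hfe hf (IsBoxMap.comp (face1_isBoxMap p2 e2) (face1_isBoxMap p1 e1)),
            X.map_comp (face1 p2 e2) (face1_isBoxMap p2 e2) (face1 p1 e1)
              (face1_isBoxMap p1 e1) x,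
            hfaces p1 e1 (by omega) hp13 (notin_avoid_ne hav1)]
          exact hedges p1 e1 p2 e2 hp21 hp12 hp13 hav1 hav2
    · obtain ⟨j₀, δ₀, g₀, hg₀, hj1, hj3, hne, hfe⟩ := id hbox
      have hginj : Function.Injective g₀ := by
        intro a b hab
        have : f a = f b := by rw [hfe]; show face1 j₀ δ₀ (g₀ a) = face1 j₀ δ₀ (g₀ b); rw [hab]
        exact hinj this
      have hm2' : m = 2 := by
        have := inj_dim_le hginj
        omega
      subst hm2'
      have hgid := inj_endo_id hg₀ hginj
      have hfe2 : f = face1 j₀ δ₀ := by rw [hfe, hgid]; rfl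
      rw [xmap_congr X hfe2 hf (face1_isBoxMap j₀ δ₀), hfaces j₀ δ₀ hj1 hj3 hne]
      exact hmarked j₀ δ₀ hj1 hj3 hne
  · exact marked_of_noninj X hf hinj x
end Dev8
section Dev9
set_option maxHeartbeats 1000000

lemma map2_eq (X : MCSet) {a b b' c : ℕ} {f1 : Cube a → Cube b} {hf1 : IsBoxMap f1}
    {g1 : Cube b → Cube c} {hg1 : IsBoxMap g1} {f2 : Cube a → Cube b'} {hf2 : IsBoxMap f2}
    {g2 : Cube b' → Cube c} {hg2 : IsBoxMap g2} (Y : X.obj c) (h : g1 ∘ f1 = g2 ∘ f2) :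
    X.map f1 hf1 (X.map g1 hg1 Y) = X.map f2 hf2 (X.map g2 hg2 Y) := by
  rw [xmap_map X f1 hf1 g1 hg1 Y, xmap_map X f2 hf2 g2 hg2 Y]
  exact xmap_congr X h _ _ Y

/-- ordered homotopy witness in configuration B (pair on the `∂₂` faces) -/
def PH (X : MCSet) (f g : X.obj 1) : Prop :=
  ∃ H : X.obj 2, X.marked H ∧
    X.map (face1 2 false) (face1_isBoxMap 2 false) H = f ∧
    X.map (face1 2 true) (face1_isBoxMap 2 true) H = g ∧
    IsDegenOne X (X.map (face1 1 false) (face1_isBoxMap 1 false) H) ∧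
    IsDegenOne X (X.map (face1 1 true) (face1_isBoxMap 1 true) H)

/-- ordered homotopy witness in configuration A (pair on the `∂₁` faces) -/
def AH (X : MCSet) (f g : X.obj 1) : Prop :=
  ∃ H : X.obj 2, X.marked H ∧
    X.map (face1 1 false) (face1_isBoxMap 1 false) H = f ∧
    X.map (face1 1 true) (face1_isBoxMap 1 true) H = g ∧
    IsDegenOne X (X.map (face1 2 false) (face1_isBoxMap 2 false) H) ∧
    IsDegenOne X (X.map (face1 2 true) (face1_isBoxMap 2 true) H)

lemma degenOne_eq (X : MCSet) {u : X.obj 1} (h : IsDegenOne X u) :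
    u = X.map (degen1 1) (degen1_isBoxMap 1)
      (X.map (face1 1 false) (face1_isBoxMap 1 false) u) := by
  obtain ⟨z, hz⟩ := h
  rw [hz]
  congr 1
  rw [xmap_map' X (toPt_unique _ (fun y => y)) IsBoxMap.id z, X.map_id]

lemma reflA (X : MCSet) (u : X.obj 1) : AH X u u := by
  refine ⟨X.map (degen1 1) (degen1_isBoxMap 1) u, X.marked_degen _ u, ?_, ?_, ?_, ?_⟩
  · rw [xmap_map' X (by decide : degen1 1 ∘ face1 1 false = (fun y : Cube 1 => y))
      IsBoxMap.id u, X.map_id]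
  · rw [xmap_map' X (by decide : degen1 1 ∘ face1 1 true = (fun y : Cube 1 => y))
      IsBoxMap.id u, X.map_id]
  · exact ⟨X.map (face1 1 false) (face1_isBoxMap 1 false) u,
      map2_eq X u (by decide : degen1 1 ∘ face1 2 false = face1 1 false ∘ degen1 1)⟩
  · exact ⟨X.map (face1 1 true) (face1_isBoxMap 1 true) u,
      map2_eq X u (by decide : degen1 1 ∘ face1 2 true = face1 1 true ∘ degen1 1)⟩

lemma reflP (X : MCSet) (u : X.obj 1) : PH X u u := by
  refine ⟨X.map (degen1 2) (degen1_isBoxMap 2) u, X.marked_degen _ u, ?_, ?_, ?_, ?_⟩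
  · rw [xmap_map' X (by decide : degen1 2 ∘ face1 2 false = (fun y : Cube 1 => y))
      IsBoxMap.id u, X.map_id]
  · rw [xmap_map' X (by decide : degen1 2 ∘ face1 2 true = (fun y : Cube 1 => y))
      IsBoxMap.id u, X.map_id]
  · exact ⟨X.map (face1 1 false) (face1_isBoxMap 1 false) u,
      map2_eq X u (by decide : degen1 2 ∘ face1 1 false = face1 1 false ∘ degen1 1)⟩
  · exact ⟨X.map (face1 1 true) (face1_isBoxMap 1 true) u,
      map2_eq X u (by decide : degen1 2 ∘ face1 1 true = face1 1 true ∘ degen1 1)⟩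

/-- sides of an A-witness are degeneracies of the endpoints of the `∂₁₀` edge -/
lemma sideA (X : MCSet) {W a : _} (ha : X.map (face1 1 false) (face1_isBoxMap 1 false) W = a)
    (δ' : Bool) (hd : IsDegenOne X (X.map (face1 2 δ') (face1_isBoxMap 2 δ') W)) :
    X.map (face1 2 δ') (face1_isBoxMap 2 δ') W =
      X.map (degen1 1) (degen1_isBoxMap 1)
        (X.map (face1 1 δ') (face1_isBoxMap 1 δ') a) := by
  rw [degenOne_eq X hd]
  congr 1
  rw [← ha]
  exact map2_eq X W
    (by cases δ' <;> decide :
      (face1 (n := 1) 2 δ') ∘ (face1 (n := 0) 1 false) =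
        (face1 (n := 1) 1 false) ∘ (face1 (n := 0) 1 δ'))

/-- sides of a P-witness are degeneracies of the endpoints of the `∂₂₀` edge -/
lemma sideP (X : MCSet) {V a : _} (ha : X.map (face1 2 false) (face1_isBoxMap 2 false) V = a)
    (δ : Bool) (hd : IsDegenOne X (X.map (face1 1 δ) (face1_isBoxMap 1 δ) V)) :
    X.map (face1 1 δ) (face1_isBoxMap 1 δ) V =
      X.map (degen1 1) (degen1_isBoxMap 1)
        (X.map (face1 1 δ) (face1_isBoxMap 1 δ) a) := by
  rw [degenOne_eq X hd]
  congr 1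
  rw [← ha]
  exact map2_eq X V
    (by cases δ <;> decide :
      (face1 (n := 1) 1 δ) ∘ (face1 (n := 0) 1 false) =
        (face1 (n := 1) 2 false) ∘ (face1 (n := 0) 1 δ))

end Dev9
section Dev10
set_option maxHeartbeats 1000000

def ptD (X : MCSet) (a : X.obj 1) (δ : Bool) : X.obj 0 :=
  X.map (face1 1 δ) (face1_isBoxMap 1 δ) a

def psqD (X : MCSet) (z : X.obj 0) : X.obj 2 :=
  X.map (degen1 1) (degen1_isBoxMap 1) (X.map (degen1 1) (degen1_isBoxMap 1) z)

lemma psqD_marked (X : MCSet) (z : X.obj 0) : X.marked (psqD X z) :=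
  X.marked_degen _ _

lemma psqD_face (X : MCSet) (jx : ℕ) (δ'' : Bool) (z : X.obj 0) :
    X.map (face1 jx δ'') (face1_isBoxMap jx δ'') (psqD X z) =
      X.map (degen1 1) (degen1_isBoxMap 1) z := by
  show X.map (face1 jx δ'') (face1_isBoxMap jx δ'')
    (X.map (degen1 1) (degen1_isBoxMap 1) (X.map (degen1 1) (degen1_isBoxMap 1) z)) = _
  rw [xmap_map X (face1 jx δ'') (face1_isBoxMap jx δ'') (degen1 1) (degen1_isBoxMap 1)]
  exact xmap_map' X (toPt_unique _ _) (degen1_isBoxMap 1) z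

lemma asq_face2 (X : MCSet) (a : X.obj 1) (δ'' : Bool) :
    X.map (face1 2 δ'') (face1_isBoxMap 2 δ'')
      (X.map (degen1 2) (degen1_isBoxMap 2) a) = a := by
  rw [xmap_map' X (by cases δ'' <;> decide :
    degen1 2 ∘ face1 2 δ'' = (fun y : Cube 1 => y)) IsBoxMap.id a, X.map_id]

lemma asq_face1 (X : MCSet) (a : X.obj 1) (δ'' : Bool) :
    X.map (face1 1 δ'') (face1_isBoxMap 1 δ'')
      (X.map (degen1 2) (degen1_isBoxMap 2) a) =
      X.map (degen1 1) (degen1_isBoxMap 1) (ptD X a δ'') := by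
  exact map2_eq X a (by cases δ'' <;> decide)

def FA (X : MCSet) (a : X.obj 1) (W1 W2 : X.obj 2) : ℕ → Bool → X.obj 2 := fun j δ =>
  if j = 1 then X.map (degen1 2) (degen1_isBoxMap 2) a
  else if j = 2 then psqD X (ptD X a δ)
  else if δ = false then W1 else W2

lemma divA (X : MCSet) (hX : IsComical X) {a b c : X.obj 1} {W1 W2 : X.obj 2}
    (hW1 : X.marked W1)
    (h10 : X.map (face1 1 false) (face1_isBoxMap 1 false) W1 = a)
    (h11 : X.map (face1 1 true) (face1_isBoxMap 1 true) W1 = b)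
    (hd10 : IsDegenOne X (X.map (face1 2 false) (face1_isBoxMap 2 false) W1))
    (hd11 : IsDegenOne X (X.map (face1 2 true) (face1_isBoxMap 2 true) W1))
    (hW2 : X.marked W2)
    (h20 : X.map (face1 1 false) (face1_isBoxMap 1 false) W2 = a)
    (h21 : X.map (face1 1 true) (face1_isBoxMap 1 true) W2 = c)
    (hd20 : IsDegenOne X (X.map (face1 2 false) (face1_isBoxMap 2 false) W2))
    (hd21 : IsDegenOne X (X.map (face1 2 true) (face1_isBoxMap 2 true) W2)) :
    PH X b c := by
  have hS1 : ∀ δ' : Bool, X.map (face1 2 δ') (face1_isBoxMap 2 δ') W1 =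
      X.map (degen1 1) (degen1_isBoxMap 1) (ptD X a δ') := by
    intro δ'
    exact sideA X h10 δ' (by cases δ'; exacts [hd10, hd11])
  have hS2 : ∀ δ' : Bool, X.map (face1 2 δ') (face1_isBoxMap 2 δ') W2 =
      X.map (degen1 1) (degen1_isBoxMap 1) (ptD X a δ') := by
    intro δ'
    exact sideA X h20 δ' (by cases δ'; exacts [hd20, hd21])
  obtain ⟨x, hxm, hfaces, hsm⟩ := fill3 X hX 1 true (le_refl 1) (by omega) (FA X a W1 W2)
    (by
      intro j' δ' j δ h1' hlt h3 hne' hne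
      have hj : (j' = 1 ∧ j = 2) ∨ (j' = 1 ∧ j = 3) ∨ (j' = 2 ∧ j = 3) := by omega
      rcases hj with ⟨rfl, rfl⟩ | ⟨rfl, rfl⟩ | ⟨rfl, rfl⟩
      · cases δ'
        · exact (psqD_face X 1 false (ptD X a δ)).trans (asq_face1 X a δ).symm
        · exact absurd rfl hne'
      · cases δ'
        · cases δ
          · exact h10.trans (asq_face2 X a false).symm
          · exact h20.trans (asq_face2 X a true).symm
        · exact absurd rfl hne'
      · cases δ
        · exact (hS1 δ').trans (psqD_face X 2 false (ptD X a δ')).symm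
        · exact (hS2 δ').trans (psqD_face X 2 true (ptD X a δ')).symm
    )
    (by
      intro j δ h1 h2 hne
      have hj : j = 1 ∨ j = 2 ∨ j = 3 := by omega
      rcases hj with rfl | rfl | rfl
      · exact X.marked_degen _ a
      · exact psqD_marked X _
      · cases δ
        · exact hW1
        · exact hW2
    )
    (by
      intro j δ j' δ' h1' hlt h3 hav hav'
      have hj' : j' = 1 ∨ j' = 2 := by omega
      rcases hj' with rfl | rfl
      · refine absurd ?_ hav'
        cases δ' <;>
          (simp only [avoidSet, Set.mem_insert_iff, Set.mem_singleton_iff]; decide)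
      · cases δ'
        · have hj : j = 3 := by omega
          subst hj
          cases δ
          · show X.marked (X.map (face1 2 false) (face1_isBoxMap 2 false) W1)
            rw [hS1 false]
            exact X.marked_degen _ _
          · show X.marked (X.map (face1 2 false) (face1_isBoxMap 2 false) W2)
            rw [hS2 false]
            exact X.marked_degen _ _
        · refine absurd ?_ hav'
          simp only [avoidSet, Set.mem_insert_iff, Set.mem_singleton_iff]
          decide
    )
  refine ⟨X.map (face1 1 true) (face1_isBoxMap 1 true) x, hsm, ?_, ?_, ?_, ?_⟩
  · have step : X.map (face1 2 false) (face1_isBoxMap 2 false)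
        (X.map (face1 1 true) (face1_isBoxMap 1 true) x) =
        X.map (face1 1 true) (face1_isBoxMap 1 true)
          (X.map (face1 3 false) (face1_isBoxMap 3 false) x) :=
      map2_eq X x (by decide)
    rw [step, hfaces 3 false (by omega) (by omega) (by decide)]
    exact h11
  · have step : X.map (face1 2 true) (face1_isBoxMap 2 true)
        (X.map (face1 1 true) (face1_isBoxMap 1 true) x) =
        X.map (face1 1 true) (face1_isBoxMap 1 true)
          (X.map (face1 3 true) (face1_isBoxMap 3 true) x) :=
      map2_eq X x (by decide)
    rw [step, hfaces 3 true (by omega) (by omega) (by decide)]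
    exact h21
  · have step : X.map (face1 1 false) (face1_isBoxMap 1 false)
        (X.map (face1 1 true) (face1_isBoxMap 1 true) x) =
        X.map (face1 1 true) (face1_isBoxMap 1 true)
          (X.map (face1 2 false) (face1_isBoxMap 2 false) x) :=
      map2_eq X x (by decide)
    rw [step, hfaces 2 false (by omega) (by omega) (by decide)]
    exact ⟨ptD X a false, psqD_face X 1 true (ptD X a false)⟩
  · have step : X.map (face1 1 true) (face1_isBoxMap 1 true)
        (X.map (face1 1 true) (face1_isBoxMap 1 true) x) =
        X.map (face1 1 true) (face1_isBoxMap 1 true)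
          (X.map (face1 2 true) (face1_isBoxMap 2 true) x) :=
      map2_eq X x (by decide)
    rw [step, hfaces 2 true (by omega) (by omega) (by decide)]
    exact ⟨ptD X a true, psqD_face X 1 true (ptD X a true)⟩
end Dev10
section Dev11
set_option maxHeartbeats 1000000

def FB (X : MCSet) (a : X.obj 1) (V1 V2 : X.obj 2) : ℕ → Bool → X.obj 2 := fun j δ =>
  if j = 1 then psqD X (ptD X a δ)
  else if j = 2 then X.map (degen1 2) (degen1_isBoxMap 2) a
  else if δ = false then V1 else V2

lemma divP (X : MCSet) (hX : IsComical X) {a b c : X.obj 1} {V1 V2 : X.obj 2}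
    (hV1 : X.marked V1)
    (h10 : X.map (face1 2 false) (face1_isBoxMap 2 false) V1 = a)
    (h11 : X.map (face1 2 true) (face1_isBoxMap 2 true) V1 = b)
    (hd10 : IsDegenOne X (X.map (face1 1 false) (face1_isBoxMap 1 false) V1))
    (hd11 : IsDegenOne X (X.map (face1 1 true) (face1_isBoxMap 1 true) V1))
    (hV2 : X.marked V2)
    (h20 : X.map (face1 2 false) (face1_isBoxMap 2 false) V2 = a)
    (h21 : X.map (face1 2 true) (face1_isBoxMap 2 true) V2 = c)
    (hd20 : IsDegenOne X (X.map (face1 1 false) (face1_isBoxMap 1 false) V2))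
    (hd21 : IsDegenOne X (X.map (face1 1 true) (face1_isBoxMap 1 true) V2)) :
    PH X b c := by
  have hS1 : ∀ δ : Bool, X.map (face1 1 δ) (face1_isBoxMap 1 δ) V1 =
      X.map (degen1 1) (degen1_isBoxMap 1) (ptD X a δ) := by
    intro δ
    exact sideP X h10 δ (by cases δ; exacts [hd10, hd11])
  have hS2 : ∀ δ : Bool, X.map (face1 1 δ) (face1_isBoxMap 1 δ) V2 =
      X.map (degen1 1) (degen1_isBoxMap 1) (ptD X a δ) := by
    intro δ
    exact sideP X h20 δ (by cases δ; exacts [hd20, hd21])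
  obtain ⟨x, hxm, hfaces, hsm⟩ := fill3 X hX 2 true (by omega) (by omega) (FB X a V1 V2)
    (by
      intro j' δ' j δ h1' hlt h3 hne' hne
      have hj : (j' = 1 ∧ j = 2) ∨ (j' = 1 ∧ j = 3) ∨ (j' = 2 ∧ j = 3) := by omega
      rcases hj with ⟨rfl, rfl⟩ | ⟨rfl, rfl⟩ | ⟨rfl, rfl⟩
      · cases δ
        · exact (asq_face1 X a δ').trans (psqD_face X 1 false (ptD X a δ')).symm
        · exact absurd rfl hne
      · cases δ
        · exact (hS1 δ').trans (psqD_face X 2 false (ptD X a δ')).symm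
        · exact (hS2 δ').trans (psqD_face X 2 true (ptD X a δ')).symm
      · cases δ'
        · cases δ
          · exact h10.trans (asq_face2 X a false).symm
          · exact h20.trans (asq_face2 X a true).symm
        · exact absurd rfl hne'
    )
    (by
      intro j δ h1 h2 hne
      have hj : j = 1 ∨ j = 2 ∨ j = 3 := by omega
      rcases hj with rfl | rfl | rfl
      · exact psqD_marked X _
      · exact X.marked_degen _ a
      · cases δ
        · exact hV1
        · exact hV2
    )
    (by
      intro j δ j' δ' h1' hlt h3 hav hav'
      have hj' : j' = 1 ∨ j' = 2 := by omega
      rcases hj' with rfl | rfl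
      · cases δ'
        · have hj : j = 2 ∨ j = 3 := by omega
          rcases hj with rfl | rfl
          · refine absurd ?_ hav
            cases δ <;>
              (simp only [avoidSet, Set.mem_insert_iff, Set.mem_singleton_iff]; decide)
          · cases δ
            · show X.marked (X.map (face1 1 false) (face1_isBoxMap 1 false) V1)
              rw [hS1 false]
              exact X.marked_degen _ _
            · refine absurd ?_ hav
              simp only [avoidSet, Set.mem_insert_iff, Set.mem_singleton_iff]
              decide
        · refine absurd ?_ hav'
          simp only [avoidSet, Set.mem_insert_iff, Set.mem_singleton_iff]
          decide
      · refine absurd ?_ hav'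
        cases δ' <;>
          (simp only [avoidSet, Set.mem_insert_iff, Set.mem_singleton_iff]; decide)
    )
  refine ⟨X.map (face1 2 true) (face1_isBoxMap 2 true) x, hsm, ?_, ?_, ?_, ?_⟩
  · have step : X.map (face1 2 false) (face1_isBoxMap 2 false)
        (X.map (face1 2 true) (face1_isBoxMap 2 true) x) =
        X.map (face1 2 true) (face1_isBoxMap 2 true)
          (X.map (face1 3 false) (face1_isBoxMap 3 false) x) :=
      map2_eq X x (by decide)
    rw [step, hfaces 3 false (by omega) (by omega) (by decide)]
    exact h11
  · have step : X.map (face1 2 true) (face1_isBoxMap 2 true)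
        (X.map (face1 2 true) (face1_isBoxMap 2 true) x) =
        X.map (face1 2 true) (face1_isBoxMap 2 true)
          (X.map (face1 3 true) (face1_isBoxMap 3 true) x) :=
      map2_eq X x (by decide)
    rw [step, hfaces 3 true (by omega) (by omega) (by decide)]
    exact h21
  · have step : X.map (face1 1 false) (face1_isBoxMap 1 false)
        (X.map (face1 2 true) (face1_isBoxMap 2 true) x) =
        X.map (face1 1 true) (face1_isBoxMap 1 true)
          (X.map (face1 1 false) (face1_isBoxMap 1 false) x) :=
      map2_eq X x (by decide)
    rw [step, hfaces 1 false (by omega) (by omega) (by decide)]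
    exact ⟨ptD X a false, psqD_face X 1 true (ptD X a false)⟩
  · have step : X.map (face1 1 true) (face1_isBoxMap 1 true)
        (X.map (face1 2 true) (face1_isBoxMap 2 true) x) =
        X.map (face1 1 true) (face1_isBoxMap 1 true)
          (X.map (face1 1 true) (face1_isBoxMap 1 true) x) :=
      map2_eq X x (by decide)
    rw [step, hfaces 1 true (by omega) (by omega) (by decide)]
    exact ⟨ptD X a true, psqD_face X 1 true (ptD X a true)⟩
end Dev11
section Dev12
set_option maxHeartbeats 1000000

lemma PH_symm (X : MCSet) (hX : IsComical X) {f g : X.obj 1} (h : PH X f g) : PH X g f := by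
  obtain ⟨H, hm, e0, e1, d0, d1⟩ := h
  obtain ⟨R, rm, r0, r1, rd0, rd1⟩ := reflP X f
  exact divP X hX hm e0 e1 d0 d1 rm r0 r1 rd0 rd1

lemma PH_trans (X : MCSet) (hX : IsComical X) {f g h : X.obj 1} (h1 : PH X f g)
    (h2 : PH X g h) : PH X f h := by
  obtain ⟨H, hm, e0, e1, d0, d1⟩ := PH_symm X hX h1
  obtain ⟨K, km, k0, k1, kd0, kd1⟩ := h2
  exact divP X hX hm e0 e1 d0 d1 km k0 k1 kd0 kd1

lemma toPH (X : MCSet) (hX : IsComical X) {f g : X.obj 1} (h : Homotopic X f g) :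
    PH X f g := by
  obtain ⟨H, hm, hcfg⟩ := h
  rcases hcfg with ⟨hor, d0, d1⟩ | ⟨hor, d0, d1⟩
  · rcases hor with ⟨hf, hg⟩ | ⟨hg, hf⟩
    · obtain ⟨R, rm, r0, r1, rd0, rd1⟩ := reflA X f
      exact divA X hX rm r0 r1 rd0 rd1 hm hf hg d0 d1
    · obtain ⟨R, rm, r0, r1, rd0, rd1⟩ := reflA X g
      exact divA X hX hm hg hf d0 d1 rm r0 r1 rd0 rd1
  · rcases hor with ⟨hf, hg⟩ | ⟨hg, hf⟩
    · exact ⟨H, hm, hf, hg, d0, d1⟩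
    · exact PH_symm X hX ⟨H, hm, hg, hf, d0, d1⟩

lemma ofPH (X : MCSet) {f g : X.obj 1} (h : PH X f g) : Homotopic X f g := by
  obtain ⟨H, hm, h0, h1, d0, d1⟩ := h
  exact ⟨H, hm, Or.inr ⟨Or.inl ⟨h0, h1⟩, d0, d1⟩⟩

end Dev12

/-- In a comical set, the homotopy relation on `1`-cubes with fixed endpoints `x`, `y`
is an equivalence relation. -/
theorem homotopic_equivalence (X : MCSet) (hX : IsComical X) (x y : X.obj 0) :
    Equivalence (fun f g : {u : X.obj 1 //
        X.map (face1 1 false) (face1_isBoxMap 1 false) u = x ∧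
        X.map (face1 1 true) (face1_isBoxMap 1 true) u = y} =>
      Homotopic X f.1 g.1) := by
  constructor
  · intro u
    obtain ⟨R, rm, r0, r1, rd0, rd1⟩ := reflA X u.1
    exact ⟨R, rm, Or.inl ⟨Or.inl ⟨r0, r1⟩, rd0, rd1⟩⟩
  · intro u v h
    exact ofPH X (PH_symm X hX (toPH X hX h))
  · intro u v w h1 h2
    exact ofPH X (PH_trans X hX (toPH X hX h1) (toPH X hX h2))
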